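/- Let K be an algebraically closed field, V a 3-dimensional K-vector space with basis {x, y, z}, and let L₂ ∈ Lie(V) be the Lie algebra structure with [x,y] = y, [x,z] = 0, [y,z] = 0. If 𝔤 is a Lie algebra structure on V such that the GL(V)-orbit of L₂ is contained in the Zariski closure of the GL(V)-orbit of 𝔤 in the variety Lie(V) of Lie algebra structures on V, then 𝔤 is isomorphic to L₂; that is, the orbit of 𝔤 equals the orbit of L₂. -/

import Mathlib

/-!
Statement 9: if the `GL(V)`-orbit of the 3-dimensional Lie algebra `L₂`
(`[x,y] = y`, `[x,z] = [y,z] = 0`) is contained in the Zariski closure of the orbit of a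
Lie algebra structure `𝔤` on `V`, then the orbit of `𝔤` equals the orbit of `L₂`.
-/

set_option maxHeartbeats 1000000

noncomputable section

/-- Structure constants of a bilinear bracket with respect to a basis. -/
def structCoeffs {K V ι : Type*} [Field K] [AddCommGroup V] [Module K V]
    (b : Module.Basis ι K V) (φ : V →ₗ[K] V →ₗ[K] V) : ι × ι × ι → K :=
  fun p => b.repr (φ (b p.1) (b p.2.1)) p.2.2

/-- The `GL(V)`-orbit of a bilinear bracket `φ` under the action
`(g • φ) u v = g (φ (g⁻¹ u) (g⁻¹ v))`. -/
def glOrbit {K V : Type*} [Field K] [AddCommGroup V] [Module K V]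
    (φ : V →ₗ[K] V →ₗ[K] V) : Set (V →ₗ[K] V →ₗ[K] V) :=
  {ψ | ∃ g : V ≃ₗ[K] V, ∀ u v : V, ψ u v = g (φ (g.symm u) (g.symm v))}

/-- `ψ` lies in the Zariski closure of `S` inside the affine space of bilinear maps. -/
def memZariskiClosure {K V ι : Type*} [Field K] [AddCommGroup V] [Module K V]
    (b : Module.Basis ι K V) (S : Set (V →ₗ[K] V →ₗ[K] V)) (ψ : V →ₗ[K] V →ₗ[K] V) : Prop :=
  ∀ p : MvPolynomial (ι × ι × ι) K,
    (∀ φ ∈ S, MvPolynomial.eval (structCoeffs b φ) p = 0) →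
      MvPolynomial.eval (structCoeffs b ψ) p = 0

section Aux

open MvPolynomial

variable {K V : Type*} [Field K] [AddCommGroup V] [Module K V]

lemma mem_glOrbit_self (φ : V →ₗ[K] V →ₗ[K] V) : φ ∈ glOrbit φ :=
  ⟨LinearEquiv.refl K V, fun _ _ => rfl⟩

lemma glOrbit_eq_of_mem {φ ψ : V →ₗ[K] V →ₗ[K] V} (h : ψ ∈ glOrbit φ) :
    glOrbit ψ = glOrbit φ := by
  obtain ⟨e, he⟩ := h
  ext χ
  constructor
  · rintro ⟨f, hf⟩
    refine ⟨e.trans f, fun u v => ?_⟩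
    rw [hf, he]
    simp [LinearEquiv.trans_apply]
  · rintro ⟨f, hf⟩
    have he' : ∀ a c : V, φ a c = e.symm (ψ (e a) (e c)) := fun a c => by
      rw [he]; simp
    refine ⟨e.symm.trans f, fun u v => ?_⟩
    rw [hf, he' (f.symm u) (f.symm v)]
    simp [LinearEquiv.trans_apply]

lemma skew_of_alt (φ : V →ₗ[K] V →ₗ[K] V) (h : ∀ v, φ v v = 0) (a c : V) :
    φ a c = - φ c a := by
  have h2 := h (a + c)
  simp only [map_add, LinearMap.add_apply, h a, h c] at h2
  rw [zero_add, add_zero] at h2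
  exact eq_neg_of_add_eq_zero_right h2

/-- second elementary symmetric entry expression for a 3×3 "matrix of entries" -/
def det3 {R : Type*} [CommRing R] (N : Fin 3 → Fin 3 → R) : R :=
  N 0 0 * N 1 1 * N 2 2 - N 0 0 * N 1 2 * N 2 1
  - N 0 1 * N 1 0 * N 2 2 + N 0 1 * N 1 2 * N 2 0
  + N 0 2 * N 1 0 * N 2 1 - N 0 2 * N 1 1 * N 2 0

/-- the distinguishing polynomial -/
def invPoly (α β : K) : MvPolynomial (Fin 3 × Fin 3 × Fin 3) K :=
  C α * (X ((0:Fin 3),(0:Fin 3),(0:Fin 3)) + X (0,1,1) + X (0,2,2))^2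
    - C β * (det3 (fun k j => X ((0:Fin 3), j, k) + if k = j then 1 else 0)
        - det3 (fun k j => X ((0:Fin 3), j, k))
        - (X ((0:Fin 3),(0:Fin 3),(0:Fin 3)) + X (0,1,1) + X (0,2,2)) - 1)

lemma eval_invPoly (b : Module.Basis (Fin 3) K V) (φ : V →ₗ[K] V →ₗ[K] V) (α β : K) :
    MvPolynomial.eval (structCoeffs b φ) (invPoly α β)
      = α * (LinearMap.trace K V (φ (b 0)))^2
        - β * (LinearMap.det ((1 : V →ₗ[K] V) + φ (b 0)) - LinearMap.det (φ (b 0))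
               - LinearMap.trace K V (φ (b 0)) - 1) := by
  set N := LinearMap.toMatrix b b (φ (b 0)) with hNdef
  have hN : ∀ k j : Fin 3, structCoeffs b φ (0, j, k) = N k j := by
    intro k j
    rw [hNdef, LinearMap.toMatrix_apply]
    rfl
  have htr : LinearMap.trace K V (φ (b 0)) = N 0 0 + N 1 1 + N 2 2 := by
    rw [LinearMap.trace_eq_matrix_trace K b, Matrix.trace_fin_three]
  have hdet : LinearMap.det (φ (b 0)) = det3 (fun k j => N k j) := by
    rw [← LinearMap.det_toMatrix b, Matrix.det_fin_three]
    rfl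
  have hdet1 : LinearMap.det ((1 : V →ₗ[K] V) + φ (b 0))
      = det3 (fun k j => N k j + if k = j then 1 else 0) := by
    have h1 : LinearMap.toMatrix b b ((1 : V →ₗ[K] V) + φ (b 0)) = 1 + N := by
      rw [map_add, LinearMap.toMatrix_one]
    rw [← LinearMap.det_toMatrix b, h1, Matrix.det_fin_three]
    simp only [det3, Matrix.add_apply, Matrix.one_apply, Fin.reduceEq, reduceIte, ite_true,
      ite_false]
    ring
  rw [htr, hdet, hdet1]
  simp only [invPoly, det3, map_sub, map_add, map_mul, map_pow, eval_C, eval_X, map_one,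
    apply_ite (MvPolynomial.eval (structCoeffs b φ)), hN, Fin.reduceEq, reduceIte,
    ite_true, ite_false, map_zero]

lemma no_closure_of_relation (b : Module.Basis (Fin 3) K V) (L₂ g : V →ₗ[K] V →ₗ[K] V)
    (hL₂_alt : ∀ v : V, L₂ v v = 0)
    (h01 : L₂ (b 0) (b 1) = b 1) (h02 : L₂ (b 0) (b 2) = 0)
    (hdeg : memZariskiClosure b (glOrbit g) L₂)
    (α β : K) (hα : α ≠ 0)
    (hrel : ∀ v : V, α * (LinearMap.trace K V (g v))^2
        = β * (LinearMap.det ((1 : V →ₗ[K] V) + g v) - LinearMap.det (g v)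
               - LinearMap.trace K V (g v) - 1)) : False := by
  have hvan : ∀ ψ ∈ glOrbit g, MvPolynomial.eval (structCoeffs b ψ) (invPoly α β) = 0 := by
    rintro ψ ⟨e, he⟩
    have hψ : ψ (b 0) = e.conj (g (e.symm (b 0))) := by
      ext w
      simp [LinearEquiv.conj_apply, he, LinearMap.comp_apply]
    have hconj1 : (1 : V →ₗ[K] V) + e.conj (g (e.symm (b 0)))
        = e.conj ((1 : V →ₗ[K] V) + g (e.symm (b 0))) := by
      rw [map_add]
      congr 1
      rw [Module.End.one_eq_id, LinearEquiv.conj_id]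
    have hdet1 : LinearMap.det ((1 : V →ₗ[K] V) + ψ (b 0))
        = LinearMap.det ((1 : V →ₗ[K] V) + g (e.symm (b 0))) := by
      rw [hψ, hconj1, LinearEquiv.conj_apply, LinearMap.comp_assoc, LinearMap.det_conj]
    have hdet0 : LinearMap.det (ψ (b 0)) = LinearMap.det (g (e.symm (b 0))) := by
      rw [hψ, LinearEquiv.conj_apply, LinearMap.comp_assoc, LinearMap.det_conj]
    have htr0 : LinearMap.trace K V (ψ (b 0)) = LinearMap.trace K V (g (e.symm (b 0))) := by
      rw [hψ, LinearMap.trace_conj']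
    rw [eval_invPoly, hdet1, hdet0, htr0, hrel (e.symm (b 0))]
    ring
  have hL := hdeg (invPoly α β) hvan
  rw [eval_invPoly] at hL
  have hM : LinearMap.toMatrix b b (L₂ (b 0)) = Matrix.of ![![0,0,0],![0,1,0],![0,0,0]] := by
    ext k j
    fin_cases j <;>
      simp [LinearMap.toMatrix_apply, hL₂_alt (b 0), h01, h02, Module.Basis.repr_self,
        Finsupp.single_apply] <;> fin_cases k <;> simp
  have htr : LinearMap.trace K V (L₂ (b 0)) = 1 := by
    rw [LinearMap.trace_eq_matrix_trace K b, hM, Matrix.trace_fin_three]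
    simp [Matrix.vecHead, Matrix.vecTail]
  have hdet : LinearMap.det (L₂ (b 0)) = 0 := by
    rw [← LinearMap.det_toMatrix b, hM, Matrix.det_fin_three]
    simp [Matrix.vecHead, Matrix.vecTail]
  have hdet1 : LinearMap.det ((1 : V →ₗ[K] V) + L₂ (b 0)) = 2 := by
    have h1 : LinearMap.toMatrix b b ((1 : V →ₗ[K] V) + L₂ (b 0))
        = 1 + Matrix.of ![![0,0,0],![0,1,0],![0,0,0]] := by
      rw [map_add, LinearMap.toMatrix_one, hM]
    rw [← LinearMap.det_toMatrix b, h1, Matrix.det_fin_three]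
    simp [Matrix.add_apply, Matrix.one_apply, Matrix.vecHead, Matrix.vecTail]
    norm_num
  rw [htr, hdet, hdet1] at hL
  apply hα
  calc α = α * 1 ^ 2 - β * (2 - 0 - 1 - 1) := by ring
  _ = 0 := hL

end Aux

theorem orbit_closure_of_L2
    (K V : Type*) [Field K] [IsAlgClosed K] [AddCommGroup V] [Module K V]
    (b : Module.Basis (Fin 3) K V)
    (L₂ g : V →ₗ[K] V →ₗ[K] V)
    -- `L₂` is the Lie algebra structure with `[x,y] = y`, `[x,z] = 0`, `[y,z] = 0`
    (hL₂_alt : ∀ v : V, L₂ v v = 0)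
    (hL₂_jac : ∀ u v w : V, L₂ u (L₂ v w) + L₂ v (L₂ w u) + L₂ w (L₂ u v) = 0)
    (h01 : L₂ (b 0) (b 1) = b 1)
    (h02 : L₂ (b 0) (b 2) = 0)
    (h12 : L₂ (b 1) (b 2) = 0)
    -- `g` is a Lie algebra structure on `V`
    (hg_alt : ∀ v : V, g v v = 0)
    (hg_jac : ∀ u v w : V, g u (g v w) + g v (g w u) + g w (g u v) = 0)
    -- the orbit of `L₂` is contained in the Zariski closure of the orbit of `g`
    (hdeg : ∀ ψ ∈ glOrbit L₂, memZariskiClosure b (glOrbit g) ψ) :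
    glOrbit g = glOrbit L₂ := by
  classical
  haveI : Module.Finite K V := Module.Finite.of_basis b
  haveI : Module.Free K V := Module.Free.of_basis b
  have hdegL : memZariskiClosure b (glOrbit g) L₂ := hdeg L₂ (mem_glOrbit_self L₂)
  set T : V →ₗ[K] K := (LinearMap.trace K V) ∘ₗ g with hTdef
  have hTapp : ∀ v, T v = LinearMap.trace K V (g v) := fun v => rfl
  have hskew : ∀ a c : V, g a c = - g c a := skew_of_alt g hg_alt
  have hadcomm : ∀ u v : V, g (g u v) = g u * g v - g v * g u := by
    intro u v
    ext w
    simp only [Module.End.mul_apply, LinearMap.sub_apply]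
    have hj := hg_jac u v w
    have h1 : g v (g w u) = - g v (g u w) := by rw [hskew w u]; simp
    have h2 : g w (g u v) = - g (g u v) w := hskew w (g u v)
    rw [h1, h2] at hj
    have h4 : g u (g v w) - g v (g u w) - g (g u v) w = 0 := by
      rw [sub_eq_add_neg, sub_eq_add_neg]; exact hj
    exact (sub_eq_zero.mp h4).symm
  have hTbr : ∀ u v : V, T (g u v) = 0 := by
    intro u v
    rw [hTapp, hadcomm u v, map_sub, LinearMap.trace_mul_comm, sub_self]
  by_cases hT0 : ∀ v, T v = 0
  · exact (no_closure_of_relation b L₂ g hL₂_alt h01 h02 hdegL 1 0 one_ne_zero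
      (fun v => by rw [← hTapp, hT0 v]; ring)).elim
  push_neg at hT0
  obtain ⟨x, hx⟩ := hT0
  have hV3 : Module.finrank K V = 3 := by
    rw [Module.finrank_eq_card_basis b, Fintype.card_fin]
  have hTne : T ≠ 0 := by
    intro h
    rw [h] at hx
    exact hx rfl
  have hker2 : Module.finrank K (LinearMap.ker T) = 2 := by
    have := Module.Dual.finrank_ker_add_one_of_ne_zero (f := T) hTne
    omega
  let c : Module.Basis (Fin 2) K (LinearMap.ker T) := Module.finBasisOfFinrankEq K _ hker2
  set w1 : V := (c 0 : V) with hw1def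
  set w2 : V := (c 1 : V) with hw2def
  have hTw1 : T w1 = 0 := (c 0).2
  have hTw2 : T w2 = 0 := (c 1).2
  have hcard : Fintype.card (Fin 3) = Module.finrank K V := by rw [Fintype.card_fin, hV3]
  -- linear independence of `x, w1, w2`
  have hli : LinearIndependent K ![x, w1, w2] := by
    rw [Fintype.linearIndependent_iff]
    intro co hco
    rw [Fin.sum_univ_three] at hco
    simp only [Matrix.cons_val_zero, Matrix.cons_val_one, Matrix.head_cons,
      Matrix.cons_val_two, Matrix.tail_cons] at hco
    have h0 : co 0 = 0 := by
      have hT' := congrArg T hco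
      simp only [map_add, map_smul, hTw1, hTw2, smul_eq_mul, mul_zero, add_zero,
        map_zero] at hT'
      rcases mul_eq_zero.mp hT' with h | h
      · exact h
      · exact absurd h hx
    have h12' : co 1 • (c 0) + co 2 • (c 1) = (0 : LinearMap.ker T) := by
      apply Subtype.ext
      push_cast
      rw [h0, zero_smul, zero_add] at hco
      exact hco
    have hc2 := Fintype.linearIndependent_iff.mp c.linearIndependent ![co 1, co 2]
      (by rw [Fin.sum_univ_two]; simpa using h12')
    intro i
    fin_cases i
    · exact h0
    · simpa using hc2 0
    · simpa using hc2 1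
  let B : Module.Basis (Fin 3) K V := basisOfLinearIndependentOfCardEqFinrank hli hcard
  have hBcoe : ⇑B = ![x, w1, w2] := coe_basisOfLinearIndependentOfCardEqFinrank hli hcard
  have hB0 : B 0 = x := by rw [hBcoe]; rfl
  have hB1 : B 1 = w1 := by rw [hBcoe]; rfl
  have hB2 : B 2 = w2 := by rw [hBcoe]; rfl
  have hrepr0 : ∀ y : V, T y = 0 → B.repr y 0 = 0 := by
    intro y hy
    have hs := congrArg T (B.sum_repr y)
    rw [map_sum, Fin.sum_univ_three] at hs
    simp only [map_smul, hB0, hB1, hB2, hTw1, hTw2, smul_eq_mul, mul_zero, add_zero, hy] at hs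
    rcases mul_eq_zero.mp hs with h | h
    · exact h
    · exact absurd h hx
  have hexp : ∀ y : V, T y = 0 → y = B.repr y 1 • w1 + B.repr y 2 • w2 := by
    intro y hy
    have hs := (B.sum_repr y).symm
    rw [Fin.sum_univ_three, hB0, hB1, hB2, hrepr0 y hy, zero_smul, zero_add] at hs
    exact hs
  have htrB : ∀ f : V →ₗ[K] V, LinearMap.trace K V f
      = B.repr (f x) 0 + B.repr (f w1) 1 + B.repr (f w2) 2 := by
    intro f
    rw [LinearMap.trace_eq_matrix_trace K B, Matrix.trace_fin_three]
    simp [LinearMap.toMatrix_apply, hB0, hB1, hB2]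
  set p := B.repr (g x w1) 1 with hpdef
  set q := B.repr (g x w1) 2 with hqdef
  set r := B.repr (g x w2) 1 with hrdef
  set s := B.repr (g x w2) 2 with hsdef
  have hgxw1 : g x w1 = p • w1 + q • w2 := hexp _ (hTbr x w1)
  have hgxw2 : g x w2 = r • w1 + s • w2 := hexp _ (hTbr x w2)
  have hgxx0 : B.repr (g x x) 0 = 0 := by rw [hg_alt x]; simp
  have hτ : T x = p + s := by
    rw [hTapp, htrB, hgxx0, zero_add]
  have hτne : p + s ≠ 0 := hτ ▸ hx
  have hw2w1 : g w2 w1 = - g w1 w2 := hskew w2 w1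
  have hw1w2 : g w1 w2 = 0 := by
    have e2 : B.repr (g w1 w2) 2 = 0 := by
      have h := hTw1
      rw [hTapp, htrB, hrepr0 (g w1 x) (hTbr w1 x), hg_alt w1, map_zero] at h
      simpa using h
    have e1 : B.repr (g w1 w2) 1 = 0 := by
      have h := hTw2
      rw [hTapp, htrB, hrepr0 (g w2 x) (hTbr w2 x), hg_alt w2, map_zero, hw2w1] at h
      simp only [map_neg, Finsupp.coe_neg, Pi.neg_apply] at h
      simpa using h
    rw [hexp (g w1 w2) (hTbr w1 w2), e1, e2, zero_smul, zero_smul, add_zero]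
  have hw2w1' : g w2 w1 = 0 := by rw [hw2w1, hw1w2, neg_zero]
  -- helpers for `B.repr` of explicit combinations
  have hreprc3 : ∀ (c1 c2 c3 : K) (k : Fin 3),
      B.repr (c1 • x + c2 • w1 + c3 • w2) k = ![c1, c2, c3] k := by
    intro c1 c2 c3 k
    rw [map_add, map_add, map_smul, map_smul, map_smul, ← hB0, ← hB1, ← hB2,
      B.repr_self, B.repr_self, B.repr_self]
    fin_cases k <;> simp [Finsupp.single_apply]
  have hgxcombo : ∀ β' γ' : K,
      g x (β' • w1 + γ' • w2) = (β'*p + γ'*r) • w1 + (β'*q + γ'*s) • w2 := by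
    intro β' γ'
    rw [map_add, map_smul, map_smul, hgxw1, hgxw2]
    module
  by_cases hΔ : p * s - q * r = 0
  · -- degenerate case : `g` is isomorphic to `L₂`
    -- eigenvector `w`
    obtain ⟨w, hwne, hweig, βw, γw, hwc⟩ :
        ∃ w : V, w ≠ 0 ∧ g x w = (p+s) • w ∧ ∃ β' γ' : K, w = β' • w1 + γ' • w2 := by
      by_cases hp : g x w1 = 0
      · have hp0 : p = 0 := by rw [hpdef, hp]; simp
        have hq0 : q = 0 := by rw [hqdef, hp]; simp
        refine ⟨g x w2, ?_, ?_, r, s, hgxw2⟩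
        · intro h0
          have hs0 : s = 0 := by rw [hsdef, h0]; simp
          exact hτne (by rw [hp0, hs0, add_zero])
        · rw [hgxw2, hgxcombo]
          match_scalars
          · ring
          · linear_combination -hΔ
      · refine ⟨g x w1, hp, ?_, p, q, hgxw1⟩
        rw [hgxw1, hgxcombo]
        match_scalars
        · linear_combination -hΔ
        · ring
    -- kernel vector `z`
    have hrepr12 : ∀ β' γ' : K,
        B.repr (β' • w1 + γ' • w2) 1 = β' ∧ B.repr (β' • w1 + γ' • w2) 2 = γ' := by
      intro β' γ'
      have h1 : β' • w1 + γ' • w2 = (0:K) • x + β' • w1 + γ' • w2 := by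
        rw [zero_smul, zero_add]
      exact ⟨by rw [h1, hreprc3]; simp, by rw [h1, hreprc3]; simp⟩
    have hcombo_ne : ∀ β' γ' : K, β' ≠ 0 → β' • w1 + γ' • w2 ≠ 0 := by
      intro β' γ' hb h0
      apply hb
      have h2 := (hrepr12 β' γ').1
      rw [h0, map_zero] at h2
      simpa using h2.symm
    obtain ⟨z, hzne, hzker, βz, γz, hzc⟩ :
        ∃ z : V, z ≠ 0 ∧ g x z = 0 ∧ ∃ β' γ' : K, z = β' • w1 + γ' • w2 := by
      by_cases hr : r = 0 ∧ p = 0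
      · -- use (s, -q); here p = 0 so s ≠ 0
        have hs0 : s ≠ 0 := fun h => hτne (by rw [hr.2, h, add_zero])
        refine ⟨s • w1 + (-q) • w2, hcombo_ne s (-q) hs0, ?_, s, -q, rfl⟩
        rw [hgxcombo]
        have e1 : s*p + -q*r = 0 := by rw [hr.1, hr.2]; ring
        have e2 : s*q + -q*s = 0 := by ring
        rw [e1, e2, zero_smul, zero_smul, add_zero]
      · -- use (r, -p)
        rcases not_and_or.mp hr with hr' | hp'
        · refine ⟨r • w1 + (-p) • w2, hcombo_ne r (-p) hr', ?_, r, -p, rfl⟩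
          rw [hgxcombo]
          have e1 : r*p + -p*r = 0 := by ring
          have e2 : r*q + -p*s = 0 := by linear_combination -hΔ
          rw [e1, e2, zero_smul, zero_smul, add_zero]
        · -- p ≠ 0 : then w1-column nonzero? use (r, -p) still; nonzero since -p ≠ 0
          refine ⟨r • w1 + (-p) • w2, ?_, ?_, r, -p, rfl⟩
          · intro h0
            have h2 := (hrepr12 r (-p)).2
            rw [h0, map_zero] at h2
            simp only [Finsupp.coe_zero, Pi.zero_apply] at h2
            exact hp' (neg_eq_zero.mp h2.symm)
          · rw [hgxcombo]
            have e1 : r*p + -p*r = 0 := by ring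
            have e2 : r*q + -p*s = 0 := by linear_combination -hΔ
            rw [e1, e2, zero_smul, zero_smul, add_zero]
    -- traces of the new basis vectors
    have hTw : T w = 0 := by rw [hwc]; simp [map_add, map_smul, hTw1, hTw2]
    have hTz : T z = 0 := by rw [hzc]; simp [map_add, map_smul, hTw1, hTw2]
    have hgwz : g w z = 0 := by
      rw [hwc, hzc]
      simp only [map_add, map_smul, LinearMap.add_apply, LinearMap.smul_apply]
      rw [hg_alt w1, hg_alt w2, hw1w2, hw2w1']
      simp
    set x' : V := (p+s)⁻¹ • x with hx'def
    have hgx'w : g x' w = w := by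
      rw [hx'def, map_smul, LinearMap.smul_apply, hweig, smul_smul,
        inv_mul_cancel₀ hτne, one_smul]
    have hgx'z : g x' z = 0 := by
      rw [hx'def, map_smul, LinearMap.smul_apply, hzker, smul_zero]
    have hTx' : T x' = 1 := by
      rw [hx'def, map_smul, smul_eq_mul, hτ, inv_mul_cancel₀ hτne]
    have hli2 : LinearIndependent K ![x', w, z] := by
      rw [Fintype.linearIndependent_iff]
      intro co hco
      rw [Fin.sum_univ_three] at hco
      simp only [Matrix.cons_val_zero, Matrix.cons_val_one, Matrix.head_cons,
        Matrix.cons_val_two, Matrix.tail_cons] at hco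
      have h0 : co 0 = 0 := by
        have hT' := congrArg T hco
        simp only [map_add, map_smul, hTx', hTw, hTz, smul_eq_mul, mul_zero, add_zero,
          mul_one, map_zero] at hT'
        exact hT'
      rw [h0, zero_smul, zero_add] at hco
      have h1 : co 1 = 0 := by
        have hg' := congrArg (g x) hco
        rw [map_add, map_smul, map_smul, hweig, hzker, smul_zero, add_zero, smul_smul,
          map_zero] at hg'
        rcases smul_eq_zero.mp hg' with h | h
        · rcases mul_eq_zero.mp h with h' | h'
          · exact h'
          · exact absurd h' hτne
        · exact absurd h hwne
      rw [h1, zero_smul, zero_add] at hco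
      have h2 : co 2 = 0 := by
        rcases smul_eq_zero.mp hco with h | h
        · exact h
        · exact absurd h hzne
      intro i; fin_cases i
      · exact h0
      · exact h1
      · exact h2
    set B2 : Module.Basis (Fin 3) K V := basisOfLinearIndependentOfCardEqFinrank hli2 hcard
      with hB2def
    have hB2coe : ⇑B2 = ![x', w, z] := coe_basisOfLinearIndependentOfCardEqFinrank hli2 hcard
    have hB2_0 : B2 0 = x' := by rw [hB2coe]; rfl
    have hB2_1 : B2 1 = w := by rw [hB2coe]; rfl
    have hB2_2 : B2 2 = z := by rw [hB2coe]; rfl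
    set E : V ≃ₗ[K] V := b.equiv B2 (Equiv.refl _) with hEdef
    have he : ∀ i, E (b i) = B2 i := fun i => by rw [hEdef, Module.Basis.equiv_apply]; rfl
    have hes : ∀ i, E.symm (B2 i) = b i := fun i => by
      rw [← he i, LinearEquiv.symm_apply_apply]
    have hL2_10 : L₂ (b 1) (b 0) = - b 1 := by rw [skew_of_alt L₂ hL₂_alt, h01]
    have hL2_20 : L₂ (b 2) (b 0) = 0 := by rw [skew_of_alt L₂ hL₂_alt, h02, neg_zero]
    have hL2_21 : L₂ (b 2) (b 1) = 0 := by rw [skew_of_alt L₂ hL₂_alt, h12, neg_zero]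
    have hgwx' : g w x' = - w := by rw [hskew w x', hgx'w]
    have hgzx' : g z x' = 0 := by rw [hskew z x', hgx'z, neg_zero]
    have hgzw : g z w = 0 := by rw [hskew z w, hgwz, neg_zero]
    have hmem : g ∈ glOrbit L₂ := by
      refine ⟨E, fun u v => ?_⟩
      have hbil : g = (L₂.compl₁₂ (E.symm : V →ₗ[K] V) (E.symm : V →ₗ[K] V)).compr₂
          (E : V →ₗ[K] V) := by
        refine B2.ext fun i => ?_
        refine B2.ext fun j => ?_
        simp only [LinearMap.compr₂_apply, LinearMap.compl₁₂_apply, LinearEquiv.coe_coe, hes]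
        fin_cases i <;> fin_cases j <;>
          simp [hB2_0, hB2_1, hB2_2, hg_alt, hL₂_alt, h01, h02, h12, hL2_10, hL2_20, hL2_21,
            hgx'w, hgx'z, hgwz, hgwx', hgzx', hgzw, he, map_neg]
      conv_lhs => rw [hbil]
      simp [LinearMap.compr₂_apply, LinearMap.compl₁₂_apply]
    exact glOrbit_eq_of_mem hmem
  · -- nondegenerate case : contradiction via the invariant polynomial
    exfalso
    refine no_closure_of_relation b L₂ g hL₂_alt h01 h02 hdegL (p*s - q*r) ((p+s)^2) hΔ ?_
    intro v
    have hrepr2 : ∀ (c2 c3 : K) (k : Fin 3), B.repr (c2 • w1 + c3 • w2) k = ![0, c2, c3] k := by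
      intro c2 c3 k
      rw [show c2 • w1 + c3 • w2 = (0:K) • x + c2 • w1 + c3 • w2 by rw [zero_smul, zero_add],
        hreprc3]
    set a := B.repr v 0 with hadef
    set β := B.repr v 1 with hβdef
    set γ := B.repr v 2 with hγdef
    have hv : v = a • x + β • w1 + γ • w2 := by
      have hs' := (B.sum_repr v).symm
      rw [Fin.sum_univ_three, hB0, hB1, hB2] at hs'
      exact hs'
    have hgvx : g v x = (-(β*p) - γ*r) • w1 + (-(β*q) - γ*s) • w2 := by
      rw [hv, map_add, map_add, map_smul, map_smul, map_smul]
      simp only [LinearMap.add_apply, LinearMap.smul_apply]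
      rw [hg_alt x, hskew w1 x, hskew w2 x, hgxw1, hgxw2]
      module
    have hgvw1 : g v w1 = (a*p) • w1 + (a*q) • w2 := by
      rw [hv, map_add, map_add, map_smul, map_smul, map_smul]
      simp only [LinearMap.add_apply, LinearMap.smul_apply]
      rw [hg_alt w1, hw2w1', hgxw1]
      module
    have hgvw2 : g v w2 = (a*r) • w1 + (a*s) • w2 := by
      rw [hv, map_add, map_add, map_smul, map_smul, map_smul]
      simp only [LinearMap.add_apply, LinearMap.smul_apply]
      rw [hg_alt w2, hw1w2, hgxw2]
      module
    have htrv : LinearMap.trace K V (g v) = a*p + a*s := by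
      rw [htrB, hgvx, hgvw1, hgvw2, hrepr2, hrepr2, hrepr2]
      simp
    have hdetv : LinearMap.det (g v) = 0 := by
      rw [← LinearMap.det_toMatrix B, Matrix.det_fin_three]
      simp only [LinearMap.toMatrix_apply, hB0, hB1, hB2, hgvx, hgvw1, hgvw2, hrepr2]
      simp
    have hdet1v : LinearMap.det ((1 : V →ₗ[K] V) + g v)
        = 1 + (a*p + a*s) + a*a*(p*s) - a*a*(q*r) := by
      rw [← LinearMap.det_toMatrix B, map_add, LinearMap.toMatrix_one, Matrix.det_fin_three]
      simp only [Matrix.add_apply, Matrix.one_apply, LinearMap.toMatrix_apply, hB0, hB1, hB2,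
        hgvx, hgvw1, hgvw2, hrepr2, Fin.reduceEq, reduceIte, ite_true, ite_false]
      simp only [Matrix.cons_val_zero, Matrix.cons_val_one, Matrix.head_cons,
        Matrix.cons_val_two, Matrix.tail_cons]
      ring
    rw [htrv, hdetv, hdet1v]
    ring
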